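/- Let T > 0, ℓ ∈ (0, T], and L₁, L₂ > 0 with L₁/L₂ irrational. Then there exists K ∈ ℕ, depending only on T, ℓ, L₁, L₂, such that: for every set I ⊆ ℝ having the property that for all t ∈ ℝ the intersection I ∩ [t, t+T] contains a closed interval of length ℓ, for every t ∈ ℝ, and for every m₁, m₂ ∈ ℕ, there exist r₁, r₂ ∈ ℕ with m₁ ≤ r₁ ≤ m₁ + K and m₂ ≤ r₂ ≤ m₂ + K such that t − r₁ L₁ − r₂ L₂ ∈ I. -/

import Mathlib

/-- Finite forward-orbit density for an irrational rotation, in additive form: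
for every `δ > 0` there is `N` such that for every `z` some `z + a*θ` with
`a ≤ N` lies within `[0, δ)` above an integer. -/
lemma lemA (θ : ℝ) (hθ : Irrational θ) (δ : ℝ) (hδ : 0 < δ) :
    ∃ N : ℕ, ∀ z : ℝ, ∃ a : ℕ, a ≤ N ∧ ∃ b : ℤ,
      0 ≤ z + a * θ - b ∧ z + a * θ - b < δ := by
  obtain ⟨n, hn⟩ := exists_nat_gt (1 / δ)
  have hnpos : 0 < n := by
    rcases Nat.eq_zero_or_pos n with h | h
    · subst h; simp at hn; exact absurd hn (not_lt.2 (by positivity))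
    · exact h
  obtain ⟨j, k, hk0, hkn, hjk⟩ := Real.exists_int_int_abs_mul_sub_le θ hnpos
  set a₀ : ℕ := k.toNat with ha₀
  have ha₀k : (a₀ : ℝ) = (k : ℝ) := by
    have : (k.toNat : ℤ) = k := Int.toNat_of_nonneg hk0.le
    rw [ha₀]; exact_mod_cast this
  set d : ℝ := (a₀ : ℝ) * θ - j with hd
  have hdne : d ≠ 0 := by
    intro h
    have ha₀0 : a₀ ≠ 0 := by
      rw [ha₀]; omega
    have : (a₀ : ℝ) * θ = (j : ℝ) := by rw [hd] at h; linarith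
    exact (hθ.natCast_mul ha₀0).ne_int j this
  have hdlt : |d| < δ := by
    have h1 : |d| ≤ 1 / (n + 1) := by rw [hd, ha₀k]; exact hjk
    have h2 : (1 : ℝ) / (n + 1) < δ := by
      rw [div_lt_iff₀ (by positivity)]
      have e1 : δ * (1 / δ) = 1 := by field_simp
      have e2 : δ * (1 / δ) < δ * n := mul_lt_mul_of_pos_left hn hδ
      nlinarith
    linarith
  refine ⟨⌈1 / |d|⌉₊ * a₀, fun z => ?_⟩
  rcases lt_or_gt_of_ne hdne with hneg | hpos
  · -- d < 0 : steps go down; start from fract z and step down by η = -d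
    have habs : |d| = -d := abs_of_neg hneg
    set η : ℝ := -d with hη
    have hηpos : 0 < η := by linarith
    have hηδ : η < δ := by rw [← habs]; exact hdlt
    set σ : ℝ := Int.fract z with hσ
    have hσ0 : 0 ≤ σ := Int.fract_nonneg z
    have hσ1 : σ < 1 := Int.fract_lt_one z
    set kk : ℕ := ⌊σ / η⌋₊ with hkk
    have hrem : z + (↑(kk * a₀)) * θ - (↑(⌊z⌋ + (kk : ℤ) * j)) = σ - kk * η := by
      have hfr : σ = z - ⌊z⌋ := rfl
      push_cast
      rw [hfr, hη, hd]
      ring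
    refine ⟨kk * a₀, ?_, ⌊z⌋ + (kk : ℤ) * j, ?_, ?_⟩
    · refine Nat.mul_le_mul_right a₀ ?_
      have hdiv : σ / η ≤ 1 / η := by gcongr <;> linarith
      calc kk ≤ ⌊1 / η⌋₊ := Nat.floor_le_floor hdiv
        _ ≤ ⌈1 / η⌉₊ := Nat.floor_le_ceil _
        _ = ⌈1 / |d|⌉₊ := by rw [habs]
    · have hkd : (kk : ℝ) * η ≤ σ := by
        rw [← le_div_iff₀ hηpos]; exact Nat.floor_le (by positivity)
      rw [hrem]; linarith
    · have hkd2 : σ < ((kk : ℝ) + 1) * η := by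
        rw [← div_lt_iff₀ hηpos]
        exact_mod_cast Nat.lt_floor_add_one (σ / η)
      rw [hrem]; nlinarith
  · -- d > 0 : step up by d, starting below ⌈z⌉
    have habs : |d| = d := abs_of_pos hpos
    set τ : ℝ := ⌈z⌉ - z with hτ
    have hτ0 : 0 ≤ τ := by rw [hτ]; linarith [Int.le_ceil z]
    have hτ1 : τ < 1 := by rw [hτ]; linarith [Int.ceil_lt_add_one z]
    set kk : ℕ := ⌈τ / d⌉₊ with hkk
    have hrem : z + (↑(kk * a₀)) * θ - (↑(⌈z⌉ + (kk : ℤ) * j)) = kk * d - τ := by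
      push_cast
      rw [hτ, hd]
      ring
    refine ⟨kk * a₀, ?_, ⌈z⌉ + (kk : ℤ) * j, ?_, ?_⟩
    · refine Nat.mul_le_mul_right a₀ ?_
      rw [habs]
      exact Nat.ceil_le_ceil (by gcongr <;> linarith)
    · have h1 : τ / d ≤ (kk : ℝ) := Nat.le_ceil _
      have h1' : τ ≤ kk * d := by rw [div_le_iff₀ hpos] at h1; linarith
      rw [hrem]; linarith
    · have h2 : (kk : ℝ) < τ / d + 1 := Nat.ceil_lt_add_one (by positivity)
      have h3 : (kk : ℝ) * d < τ + d := by
        have : (τ / d + 1) * d = τ + d := by field_simp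
        nlinarith
      rw [hrem]
      have : d < δ := habs ▸ hdlt
      linarith

/-- Lemma `LemmTimeIRhoAlpha` (abstract form): if `L₁/L₂` is irrational and `I ⊆ ℝ`
contains a closed interval of length `ℓ` in every window `[t, t+T]`, then any point
`t` can be brought into `I` by subtracting `r₁ L₁ + r₂ L₂` with `rᵢ` natural numbers
exceeding prescribed values `mᵢ` by at most a uniform constant `K`. -/
theorem stmt13 (T ℓ L₁ L₂ : ℝ) (hT : 0 < T) (hℓ : 0 < ℓ) (hℓT : ℓ ≤ T)
    (hL₁ : 0 < L₁) (hL₂ : 0 < L₂) (hirr : Irrational (L₁ / L₂)) :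
    ∃ K : ℕ, ∀ I : Set ℝ,
      (∀ t : ℝ, ∃ c : ℝ, Set.Icc c (c + ℓ) ⊆ I ∩ Set.Icc t (t + T)) →
      ∀ (t : ℝ) (m₁ m₂ : ℕ), ∃ r₁ r₂ : ℕ,
        m₁ ≤ r₁ ∧ r₁ ≤ m₁ + K ∧ m₂ ≤ r₂ ∧ r₂ ≤ m₂ + K ∧
        t - r₁ * L₁ - r₂ * L₂ ∈ I := by
  obtain ⟨N, hN⟩ := lemA (L₁ / L₂) hirr (ℓ / L₂) (by positivity)
  refine ⟨N + ⌈(N * L₁ + T + ℓ) / L₂⌉₊, fun I hI t m₁ m₂ => ?_⟩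
  set s : ℝ := t - m₁ * L₁ - m₂ * L₂ with hs
  obtain ⟨c, hc⟩ := hI (s - N * L₁ - T)
  have hcl : s - N * L₁ - T ≤ c := by
    have := (hc ⟨le_refl c, by linarith⟩).2.1
    linarith [this]
  have hcr : c + ℓ ≤ s - N * L₁ := by
    have := (hc ⟨by linarith, le_refl (c + ℓ)⟩).2.2
    linarith [this]
  set x : ℝ := s - c - ℓ with hx
  have hx1 : N * L₁ ≤ x := by rw [hx]; linarith
  have hx2 : x ≤ N * L₁ + T - ℓ := by rw [hx]; linarith
  obtain ⟨a, haN, b', hb1, hb2⟩ := hN (-x / L₂)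
  -- multiply through by L₂
  have key1 : 0 ≤ a * L₁ - b' * L₂ - x := by
    have := mul_le_mul_of_nonneg_right hb1 hL₂.le
    rw [zero_mul] at this
    calc (0:ℝ) ≤ (-x / L₂ + a * (L₁ / L₂) - b') * L₂ := this
      _ = a * L₁ - b' * L₂ - x := by field_simp; ring
  have key2 : a * L₁ - b' * L₂ - x < ℓ := by
    have := mul_lt_mul_of_pos_right hb2 hL₂
    have heq : (-x / L₂ + a * (L₁ / L₂) - b') * L₂ = a * L₁ - b' * L₂ - x := by
      field_simp; ring
    have heq2 : ℓ / L₂ * L₂ = ℓ := by field_simp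
    rw [heq, heq2] at this
    exact this
  -- b' ≤ 0
  have hb'0 : b' ≤ 0 := by
    by_contra h
    push_neg at h
    have h1 : (1 : ℝ) ≤ (b' : ℝ) := by exact_mod_cast h
    have haL : (a : ℝ) * L₁ ≤ N * L₁ := by
      apply mul_le_mul_of_nonneg_right _ hL₁.le
      exact_mod_cast haN
    nlinarith
  set b : ℕ := (-b').toNat with hb
  have hbcast : (b : ℝ) = -(b' : ℝ) := by
    have : ((-b').toNat : ℤ) = -b' := Int.toNat_of_nonneg (Int.neg_nonneg.2 hb'0)
    rw [hb]; exact_mod_cast this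
  have hbK : b ≤ ⌈(N * L₁ + T + ℓ) / L₂⌉₊ := by
    have h1 : (b : ℝ) * L₂ ≤ N * L₁ + T := by
      have : (b : ℝ) * L₂ = ((a : ℝ) * L₁ - b' * L₂ - x) - a * L₁ + x := by
        rw [hbcast]; ring
      have haL : (a : ℝ) * L₁ ≤ N * L₁ := by
        apply mul_le_mul_of_nonneg_right _ hL₁.le
        exact_mod_cast haN
      nlinarith
    have h2 : (b : ℝ) ≤ (N * L₁ + T + ℓ) / L₂ := by
      rw [le_div_iff₀ hL₂]
      nlinarith
    calc b ≤ ⌈(b : ℝ)⌉₊ := by simp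
      _ ≤ ⌈(N * L₁ + T + ℓ) / L₂⌉₊ := Nat.ceil_le_ceil h2
  refine ⟨m₁ + a, m₂ + b, le_add_right (le_refl m₁), by omega,
    le_add_right (le_refl m₂), by omega, ?_⟩
  have hval : t - (↑(m₁ + a)) * L₁ - (↑(m₂ + b)) * L₂
      = c + ℓ - (a * L₁ - b' * L₂ - x) := by
    push_cast
    rw [hbcast, hx, hs]
    ring
  rw [hval]
  exact (hc ⟨by linarith, by linarith⟩).1
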